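/- Let I and J be monomial ideals of R = K[x_1,…,x_n], let u be a monomial with supp(u) ∩ (supp(I) ∪ supp(J)) = ∅, and set L = uI + J. Then for every integer t ≥ 1, the colon ideal satisfies (L^t : u^t) = (I + J)^t. -/

import Mathlib

open MvPolynomial

/-- `I` is a monomial ideal admitting a monomial generating set in which no
monomial is divisible by a variable `x_i` with `i ∈ A`; equivalently, `I` is a
monomial ideal whose support is disjoint from `A`. -/
def MonomialIdealAvoiding {K : Type*} [Field K] {n : ℕ} (A : Set (Fin n))
    (I : Ideal (MvPolynomial (Fin n) K)) : Prop :=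
  ∃ S : Set (Fin n →₀ ℕ), (∀ e ∈ S, ∀ i ∈ A, e i = 0) ∧
    I = Ideal.span ((fun e => MvPolynomial.monomial e (1 : K)) '' S)

namespace ColonPowAux

variable {K : Type*} [Field K] {n : ℕ}

/-- The linear "coefficient extraction": `T d c f` collects the monomials of `f`
whose exponent restricted to `d.support` equals `c`, and strips off that part. -/
noncomputable def T (d c : Fin n →₀ ℕ) (f : MvPolynomial (Fin n) K) :
    MvPolynomial (Fin n) K :=
  Finsupp.sum (AddMonoidAlgebra.coeff f) fun e s =>
    if e.filter (fun i => i ∈ d.support) = c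
    then monomial (e.filter (fun i => ¬ i ∈ d.support)) s else 0

lemma T_monomial (d c b : Fin n →₀ ℕ) (s : K) :
    T d c (monomial b s) =
      if b.filter (fun i => i ∈ d.support) = c
      then monomial (b.filter (fun i => ¬ i ∈ d.support)) s else 0 := by
  rw [T, ← single_eq_monomial b s, AddMonoidAlgebra.coeff_single,
    Finsupp.sum_single_index (by split_ifs <;> simp)]

lemma T_zero (d c : Fin n →₀ ℕ) : T d c (0 : MvPolynomial (Fin n) K) = 0 :=
  by rw [T, AddMonoidAlgebra.coeff_zero]; exact Finsupp.sum_zero_index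

lemma T_add (d c : Fin n →₀ ℕ) (f g : MvPolynomial (Fin n) K) :
    T d c (f + g) = T d c f + T d c g := by
  rw [T, T, T, AddMonoidAlgebra.coeff_add]
  refine Finsupp.sum_add_index' (fun e => ?_) (fun e s₁ s₂ => ?_)
  · split_ifs <;> simp
  · split_ifs <;> simp [map_add]

/-- `T d c` as an additive monoid hom. -/
noncomputable def Thom (d c : Fin n →₀ ℕ) :
    MvPolynomial (Fin n) K →+ MvPolynomial (Fin n) K :=
  AddMonoidHom.mk' (T d c) (T_add d c)

lemma T_finset_sum (d c : Fin n →₀ ℕ) {ι : Type*} (s : Finset ι)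
    (f : ι → MvPolynomial (Fin n) K) :
    T d c (∑ i ∈ s, f i) = ∑ i ∈ s, T d c (f i) :=
  map_sum (Thom d c) f s

lemma T_mul (d c : Fin n →₀ ℕ) (f g : MvPolynomial (Fin n) K) :
    T d c (f * g) =
      ∑ p ∈ Finset.HasAntidiagonal.antidiagonal c, T d p.1 f * T d p.2 g := by
  classical
  conv_lhs => rw [as_sum f, as_sum g]
  conv_rhs => rw [as_sum f, as_sum g]
  rw [Finset.sum_mul_sum, T_finset_sum]
  simp only [T_finset_sum, Finset.sum_mul_sum, monomial_mul, T_monomial, Finsupp.filter_add]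
  conv_rhs => rw [Finset.sum_comm]
  refine Finset.sum_congr rfl fun a _ => ?_
  conv_rhs => rw [Finset.sum_comm]
  refine Finset.sum_congr rfl fun b _ => ?_
  have h : ∀ p ∈ Finset.HasAntidiagonal.antidiagonal c,
      (if Finsupp.filter (fun i => i ∈ d.support) a = p.1
        then monomial (Finsupp.filter (fun i => i ∉ d.support) a) (coeff a f) else 0) *
      (if Finsupp.filter (fun i => i ∈ d.support) b = p.2
        then monomial (Finsupp.filter (fun i => i ∉ d.support) b) (coeff b g) else 0) =
      if (Finsupp.filter (fun i => i ∈ d.support) a,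
          Finsupp.filter (fun i => i ∈ d.support) b) = p
        then monomial (Finsupp.filter (fun i => i ∉ d.support) a) (coeff a f) *
             monomial (Finsupp.filter (fun i => i ∉ d.support) b) (coeff b g) else 0 := by
    rintro ⟨p1, p2⟩ _
    by_cases h1 : Finsupp.filter (fun i => i ∈ d.support) a = p1
    · by_cases h2 : Finsupp.filter (fun i => i ∈ d.support) b = p2
      · rw [if_pos h1, if_pos h2, if_pos (by rw [h1, h2])]
      · rw [if_pos h1, if_neg h2, mul_zero,
          if_neg (fun hh => h2 (congrArg Prod.snd hh))]
    · rw [if_neg h1, zero_mul,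
        if_neg (fun hh => h1 (congrArg Prod.fst hh))]
  rw [Finset.sum_congr rfl h, Finset.sum_ite_eq (Finset.HasAntidiagonal.antidiagonal c)]
  by_cases hc : Finsupp.filter (fun i => i ∈ d.support) a
      + Finsupp.filter (fun i => i ∈ d.support) b = c
  · rw [if_pos hc, if_pos (Finset.HasAntidiagonal.mem_antidiagonal.2 hc), monomial_mul]
  · rw [if_neg hc, if_neg (fun hm => hc (Finset.HasAntidiagonal.mem_antidiagonal.1 hm))]

lemma T_eq_sum (d c : Fin n →₀ ℕ) (f : MvPolynomial (Fin n) K) :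
    T d c f = ∑ e ∈ f.support,
      (if e.filter (fun i => i ∈ d.support) = c
       then monomial (e.filter (fun i => ¬ i ∈ d.support)) (coeff e f) else 0) := by
  rw [T, MvPolynomial.sum_def]

/-- reconstruction of `f` from its extractions. -/
lemma T_reconstruct (d : Fin n →₀ ℕ) (f : MvPolynomial (Fin n) K) :
    f = ∑ c ∈ f.support.image (fun e => e.filter (fun i => i ∈ d.support)),
          monomial c 1 * T d c f := by
  classical
  conv_lhs => rw [as_sum f]
  rw [← Finset.sum_fiberwise_of_maps_to
    (fun e he => Finset.mem_image_of_mem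
      (fun e => Finsupp.filter (fun i => i ∈ d.support) e) he)]
  refine Finset.sum_congr rfl fun c hc => ?_
  rw [T_eq_sum, Finset.mul_sum, Finset.sum_filter]
  refine Finset.sum_congr rfl fun e he => ?_
  by_cases h : e.filter (fun i => i ∈ d.support) = c
  · rw [if_pos h, if_pos h, monomial_mul, one_mul]
    have he2 : c + Finsupp.filter (fun i => i ∉ d.support) e = e := by
      rw [← h]
      exact Finsupp.filter_pos_add_filter_neg e (fun i => i ∈ d.support)
    rw [he2]
  · rw [if_neg h, if_neg h, mul_zero]

lemma mem_of_T_mem (d : Fin n →₀ ℕ) (M : Ideal (MvPolynomial (Fin n) K))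
    (f : MvPolynomial (Fin n) K) (h : ∀ c, T d c f ∈ M) : f ∈ M := by
  rw [T_reconstruct d f]
  exact Submodule.sum_mem M fun c _ => Ideal.mul_mem_left _ _ (h c)

/-- the "comap along all extractions" ideal. -/
noncomputable def C (d : Fin n →₀ ℕ) (M : Ideal (MvPolynomial (Fin n) K)) :
    Ideal (MvPolynomial (Fin n) K) where
  carrier := {x | ∀ c, T d c x ∈ M}
  zero_mem' := fun c => by rw [T_zero]; exact M.zero_mem
  add_mem' := fun hx hy c => by rw [T_add]; exact M.add_mem (hx c) (hy c)
  smul_mem' := fun r x hx c => by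
    rw [smul_eq_mul, T_mul]
    exact Submodule.sum_mem M fun p _ => Ideal.mul_mem_left _ _ (hx p.2)

lemma mem_C_iff {d : Fin n →₀ ℕ} {M : Ideal (MvPolynomial (Fin n) K)}
    {x : MvPolynomial (Fin n) K} : x ∈ C d M ↔ ∀ c, T d c x ∈ M := Iff.rfl

lemma C_mono {d : Fin n →₀ ℕ} {M N : Ideal (MvPolynomial (Fin n) K)} (h : M ≤ N) :
    C d M ≤ C d N := fun _ hx c => h (hx c)

lemma mul_le_C {d : Fin n →₀ ℕ} {M₁ M₂ N₁ N₂ : Ideal (MvPolynomial (Fin n) K)}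
    (h1 : M₁ ≤ C d N₁) (h2 : M₂ ≤ C d N₂) : M₁ * M₂ ≤ C d (N₁ * N₂) :=
  Ideal.mul_le.2 fun r hr s hs c => by
    rw [T_mul]
    exact Submodule.sum_mem _ fun p _ => Ideal.mul_mem_mul (h1 hr p.1) (h2 hs p.2)

lemma le_C_top {d : Fin n →₀ ℕ} (M : Ideal (MvPolynomial (Fin n) K)) :
    M ≤ C d ⊤ := fun x _ c => trivial

lemma avoiding_le_C (d : Fin n →₀ ℕ) (S : Set (Fin n →₀ ℕ))
    (hS : ∀ e ∈ S, ∀ i ∈ d.support, e i = 0) :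
    Ideal.span ((fun e => monomial e (1 : K)) '' S) ≤
      C d (Ideal.span ((fun e => monomial e (1 : K)) '' S)) := by
  rw [Ideal.span_le]
  rintro g ⟨e, he, rfl⟩
  intro c
  have hIn : e.filter (fun i => i ∈ d.support) = 0 :=
    (Finsupp.filter_eq_zero_iff _ _).2 fun i hi => hS e he i hi
  have hOut : e.filter (fun i => ¬ i ∈ d.support) = e :=
    (Finsupp.filter_eq_self_iff _ _).2 fun i hi hmem => hi (hS e he i hmem)
  rw [T_monomial, hIn, hOut]
  split_ifs
  · exact Ideal.subset_span ⟨e, he, rfl⟩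
  · exact Ideal.zero_mem _

lemma T_shift (d c b : Fin n →₀ ℕ)
    (hb : b.filter (fun i => i ∈ d.support) = b) (f : MvPolynomial (Fin n) K) :
    T d (c + b) (monomial b 1 * f) = T d c f := by
  have hOutb : b.filter (fun i => ¬ i ∈ d.support) = 0 := by
    refine (Finsupp.filter_eq_zero_iff _ _).2 fun i hi => ?_
    by_contra hne
    exact hi (((Finsupp.filter_eq_self_iff _ _).1 hb) i hne)
  rw [T_mul]
  rw [Finset.sum_eq_single (b, c)]
  · rw [T_monomial, hb, if_pos rfl, hOutb, monomial_zero', C_1, one_mul]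
  · rintro ⟨p1, p2⟩ hp hne
    rw [T_monomial, hb]
    by_cases h : b = p1
    · exfalso
      apply hne
      subst h
      rw [Finset.HasAntidiagonal.mem_antidiagonal] at hp
      have hp2 : p2 = c := by
        have h2 : b + p2 = b + c := by rw [hp]; exact add_comm c b
        exact add_left_cancel h2
      rw [hp2]
    · rw [if_neg h, zero_mul]
  · intro hmem
    exact absurd (Finset.HasAntidiagonal.mem_antidiagonal.2 (add_comm b c)) hmem

end ColonPowAux

/-- Let `I, J` be monomial ideals of `R = K[x_1,…,x_n]`,
let `u` be a monomial (with exponent vector `d`) whose support is disjoint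
from `supp I ∪ supp J`, and set `L = uI + J`.  Then for every `t ≥ 1`,
`(L^t : u^t) = (I + J)^t`. -/
theorem colon_pow_eq_add_pow
    {K : Type*} [Field K] {n : ℕ}
    (I J : Ideal (MvPolynomial (Fin n) K))
    (d : Fin n →₀ ℕ)
    (hdI : MonomialIdealAvoiding (↑d.support) I)
    (hdJ : MonomialIdealAvoiding (↑d.support) J)
    (L : Ideal (MvPolynomial (Fin n) K))
    (hL : L = Ideal.span {(MvPolynomial.monomial d (1 : K))} * I + J)
    (t : ℕ) (ht : 1 ≤ t) :
    (L ^ t).colon (Ideal.span {(MvPolynomial.monomial d (1 : K)) ^ t})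
      = (I + J) ^ t := by
  classical
  set u : MvPolynomial (Fin n) K := MvPolynomial.monomial d (1 : K) with hu
  obtain ⟨S, hS, hIS⟩ := hdI
  obtain ⟨S', hS', hJS⟩ := hdJ
  have hI : I ≤ ColonPowAux.C d I := by
    rw [hIS]
    exact ColonPowAux.avoiding_le_C d S fun e he i hi => hS e he i (Finset.mem_coe.2 hi)
  have hJ : J ≤ ColonPowAux.C d J := by
    rw [hJS]
    exact ColonPowAux.avoiding_le_C d S' fun e he i hi => hS' e he i (Finset.mem_coe.2 hi)
  have hLC : L ≤ ColonPowAux.C d (I + J) := by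
    rw [hL]
    refine sup_le ?_ ?_
    · have h1 : Ideal.span {u} * I ≤ ColonPowAux.C d (⊤ * I) :=
        ColonPowAux.mul_le_C (ColonPowAux.le_C_top _) hI
      rw [Ideal.top_mul] at h1
      exact le_trans h1 (ColonPowAux.C_mono le_sup_left)
    · exact le_trans hJ (ColonPowAux.C_mono le_sup_right)
  have hLpow : ∀ m, L ^ m ≤ ColonPowAux.C d ((I + J) ^ m) := by
    intro m
    induction m with
    | zero =>
        rw [pow_zero, pow_zero, Ideal.one_eq_top]
        exact ColonPowAux.le_C_top _
    | succ m ih =>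
        rw [pow_succ, pow_succ]
        exact ColonPowAux.mul_le_C ih hLC
  apply le_antisymm
  · intro f hf
    have hfu : f * u ^ t ∈ L ^ t := Ideal.mem_colon_span_singleton.1 hf
    have hT : ∀ c, ColonPowAux.T d c (f * u ^ t) ∈ (I + J) ^ t := (hLpow t) hfu
    refine ColonPowAux.mem_of_T_mem d _ f fun c => ?_
    have hut : u ^ t = MvPolynomial.monomial (t • d) (1 : K) := by
      rw [hu, MvPolynomial.monomial_pow, one_pow]
    have htd : (t • d).filter (fun i => i ∈ d.support) = t • d := by
      refine (Finsupp.filter_eq_self_iff _ _).2 fun i hi => ?_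
      by_contra hmem
      apply hi
      rw [Finsupp.smul_apply, Finsupp.notMem_support_iff.1 hmem, smul_zero]
    have hshift := ColonPowAux.T_shift d c (t • d) htd f
    rw [← hshift]
    have heq : MvPolynomial.monomial (t • d) (1 : K) * f = f * u ^ t := by
      rw [hut, mul_comm]
    rw [heq]
    exact hT _
  · intro f hf
    rw [Ideal.mem_colon_span_singleton]
    have h1 : Ideal.span {u} * (I + J) ≤ L := by
      rw [hL, mul_add]
      exact add_le_add le_rfl Ideal.mul_le_right
    have h2 : ∀ m, (Ideal.span {u} * (I + J)) ^ m ≤ L ^ m := by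
      intro m
      induction m with
      | zero => simp
      | succ m ih =>
          rw [pow_succ, pow_succ]
          exact Ideal.mul_mono ih h1
    have h3 : Ideal.span {u ^ t} * (I + J) ^ t ≤ L ^ t := by
      rw [← Ideal.span_singleton_pow, ← mul_pow]
      exact h2 t
    rw [mul_comm]
    exact h3 (Ideal.mul_mem_mul (Ideal.subset_span (Set.mem_singleton _)) hf)
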